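/- For any integer d ≥ 2, any real p ≥ 0, and any (x_1,…,x_d) ∈ Δ_d, it holds that Σ_{i=1}^{d−1} Σ_{k ∉ {i, i+1}, 1 ≤ k ≤ d} 1/((x_{i+1} − x_i)^p (x_{i+1} − x_k)(x_i − x_k)) < (2 − 3/d) Σ_{i=1}^{d−1} 1/(x_{i+1} − x_i)^{p+2}. -/

import Mathlib

open Finset

namespace SumOffdiagAux


/-- `vv m = 1/m²`. -/
noncomputable def vv (m : ℕ) : ℝ := 1 / ((m : ℝ)) ^ 2

/-- `ww m = 1/(m(m+1))`. -/
noncomputable def ww (m : ℕ) : ℝ := 1 / ((m : ℝ) * ((m : ℝ) + 1))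

lemma vv_one : vv 1 = 1 := by norm_num [vv]

lemma ww_succ_eq (j : ℕ) : ww (j + 1) = 1 / ((j : ℝ) + 1) - 1 / ((j : ℝ) + 2) := by
  unfold ww
  push_cast
  rw [div_sub_div _ _ (by positivity) (by positivity)]
  ring_nf

lemma sum_ww (c : ℕ) : ∑ j ∈ range c, ww (j + 1) = 1 - 1 / ((c : ℝ) + 1) := by
  have h : ∀ j ∈ range c, ww (j + 1) =
      (fun j : ℕ => 1 / ((j : ℝ) + 1)) j - (fun j : ℕ => 1 / ((j : ℝ) + 1)) (j + 1) := by
    intro j _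
    rw [ww_succ_eq]
    push_cast
    ring_nf
  rw [sum_congr rfl h, sum_range_sub' (fun j : ℕ => 1 / ((j : ℝ) + 1)) c]
  norm_num

lemma ww_lt_vv (m : ℕ) (hm : 1 ≤ m) : ww m < vv m := by
  unfold ww vv
  have h1 : (1 : ℝ) ≤ (m : ℝ) := by exact_mod_cast hm
  have h2 : (0 : ℝ) < (m : ℝ) := by linarith
  apply div_lt_div_of_pos_left one_pos (by positivity)
  nlinarith

/-- Telescoped lower bound for the tail sum `∑_{k=t}^{n-1} 1/(k+1)²`, strict. -/
lemma tail_lt (t n : ℕ) (h : t < n) :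
    1 / ((t : ℝ) + 1) - 1 / ((n : ℝ) + 1) < ∑ k ∈ Ico t n, vv (k + 1) := by
  have hww : ∑ k ∈ Ico t n, ww (k + 1) = 1 / ((t : ℝ) + 1) - 1 / ((n : ℝ) + 1) := by
    rw [sum_Ico_eq_sum_range]
    have h2 : ∀ j ∈ range (n - t), ww (t + j + 1) =
        (fun j : ℕ => 1 / ((t : ℝ) + (j : ℝ) + 1)) j -
        (fun j : ℕ => 1 / ((t : ℝ) + (j : ℝ) + 1)) (j + 1) := by
      intro j _
      rw [ww_succ_eq]
      push_cast
      ring_nf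
    rw [sum_congr rfl h2, sum_range_sub' (fun j : ℕ => 1 / ((t : ℝ) + (j : ℝ) + 1)) (n - t)]
    have : ((n - t : ℕ) : ℝ) = (n : ℝ) - (t : ℝ) := by
      push_cast [Nat.cast_sub h.le]
      ring
    rw [this]
    ring_nf
  rw [← hww]
  apply sum_lt_sum_of_nonempty (by rw [nonempty_Ico]; omega)
  intro k _
  exact ww_lt_vv (k + 1) (by omega)

/-- weighted AM-GM for our three reciprocal powers. -/
lemma amgm (p : ℝ) (hp : 0 ≤ p) {a b c : ℝ} (ha : 0 < a) (hb : 0 < b) (hc : 0 < c) :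
    (a ^ p)⁻¹ * b⁻¹ * c⁻¹ ≤
      p / (p + 2) * (1 / a ^ (p + 2)) + 1 / (p + 2) * (1 / b ^ (p + 2))
        + 1 / (p + 2) * (1 / c ^ (p + 2)) := by
  have hp2 : (0 : ℝ) < p + 2 := by linarith
  have e1 : ((a ^ (p + 2))⁻¹) ^ (p / (p + 2)) = (a ^ p)⁻¹ := by
    rw [← Real.rpow_neg ha.le, ← Real.rpow_mul ha.le,
      show -(p + 2) * (p / (p + 2)) = -p by field_simp, Real.rpow_neg ha.le]
  have e2 : ((b ^ (p + 2))⁻¹) ^ ((1 : ℝ) / (p + 2)) = b⁻¹ := by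
    rw [← Real.rpow_neg hb.le, ← Real.rpow_mul hb.le,
      show -(p + 2) * (1 / (p + 2)) = -1 by field_simp, Real.rpow_neg_one]
  have e3 : ((c ^ (p + 2))⁻¹) ^ ((1 : ℝ) / (p + 2)) = c⁻¹ := by
    rw [← Real.rpow_neg hc.le, ← Real.rpow_mul hc.le,
      show -(p + 2) * (1 / (p + 2)) = -1 by field_simp, Real.rpow_neg_one]
  have key := Real.geom_mean_le_arith_mean3_weighted
    (w₁ := p / (p + 2)) (w₂ := 1 / (p + 2)) (w₃ := 1 / (p + 2))
    (p₁ := (a ^ (p + 2))⁻¹) (p₂ := (b ^ (p + 2))⁻¹) (p₃ := (c ^ (p + 2))⁻¹)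
    (by positivity) (by positivity) (by positivity)
    (by positivity) (by positivity) (by positivity)
    (by field_simp; ring)
  rw [e1, e2, e3] at key
  calc (a ^ p)⁻¹ * b⁻¹ * c⁻¹ ≤
      p / (p + 2) * (a ^ (p + 2))⁻¹ + 1 / (p + 2) * (b ^ (p + 2))⁻¹
        + 1 / (p + 2) * (c ^ (p + 2))⁻¹ := key
    _ = p / (p + 2) * (1 / a ^ (p + 2)) + 1 / (p + 2) * (1 / b ^ (p + 2))
        + 1 / (p + 2) * (1 / c ^ (p + 2)) := by simp only [one_div]

/-- The key per-pair estimate. -/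
lemma core (p : ℝ) (hp : 0 ≤ p) (g : ℕ → ℝ) (S : Finset ℕ) (i : ℕ)
    (hiS : i ∉ S) (hne : S.Nonempty) (hpos : ∀ j ∈ insert i S, 0 < g j) :
    (g i ^ p * (∑ j ∈ insert i S, g j) * (∑ j ∈ S, g j))⁻¹ ≤
      (p / (p + 2) * ww S.card + 1 / (p + 2) * (ww S.card - vv (S.card + 1))) *
          (1 / g i ^ (p + 2))
        + 1 / (p + 2) * (vv S.card - vv (S.card + 1)) * (∑ a ∈ S, 1 / g a ^ (p + 2)) := by
  have hgi : 0 < g i := hpos i (mem_insert_self i S)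
  have hposS : ∀ j ∈ S, 0 < g j := fun j hj => hpos j (mem_insert_of_mem hj)
  have hm1 : 1 ≤ S.card := card_pos.mpr hne
  have hmR : (1 : ℝ) ≤ (S.card : ℝ) := by exact_mod_cast hm1
  have hm0 : ((S.card : ℝ)) ≠ 0 := by linarith
  have hm0' : ((S.card : ℝ)) + 1 ≠ 0 := by linarith
  set m := S.card with hm
  set A := ∑ j ∈ S, g j with hA
  set HS := ∑ j ∈ S, (g j)⁻¹ with hHS
  have hApos : 0 < A := sum_pos hposS hne
  have hHSpos : 0 < HS := sum_pos (fun j hj => inv_pos.mpr (hposS j hj)) hne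
  have hB : ∑ j ∈ insert i S, g j = g i + A := sum_insert hiS
  have hHS' : ∑ j ∈ insert i S, (g j)⁻¹ = (g i)⁻¹ + HS := sum_insert hiS
  set B := g i + A with hBdef
  set HS' := (g i)⁻¹ + HS with hHS'def
  have hBpos : 0 < B := by positivity
  have hHS'pos : 0 < HS' := by positivity
  have hcardins : (insert i S).card = m + 1 := card_insert_of_notMem hiS
  -- Cauchy-Schwarz (AM-HM)
  have c1 : ((m : ℝ)) ^ 2 ≤ A * HS := by
    have := sum_sq_le_sum_mul_sum_of_sq_eq_mul S
      (r := fun _ => (1 : ℝ)) (f := g) (g := fun j => (g j)⁻¹)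
      (fun j hj => (hposS j hj).le) (fun j hj => (inv_pos.mpr (hposS j hj)).le)
      (fun j hj => by rw [one_pow, mul_inv_cancel₀ (hposS j hj).ne'])
    simpa [sum_const, nsmul_eq_mul] using this
  have c2 : ((m : ℝ) + 1) ^ 2 ≤ B * HS' := by
    have := sum_sq_le_sum_mul_sum_of_sq_eq_mul (insert i S)
      (r := fun _ => (1 : ℝ)) (f := g) (g := fun j => (g j)⁻¹)
      (fun j hj => (hpos j hj).le) (fun j hj => (inv_pos.mpr (hpos j hj)).le)
      (fun j hj => by rw [one_pow, mul_inv_cancel₀ (hpos j hj).ne'])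
    rw [hB, hHS', sum_const, hcardins] at this
    push_cast at this
    simpa using this
  have inv1 : A⁻¹ ≤ HS / (m : ℝ) ^ 2 := by
    rw [le_div_iff₀ (by positivity)]
    calc A⁻¹ * (m : ℝ) ^ 2 ≤ A⁻¹ * (A * HS) := by
          apply mul_le_mul_of_nonneg_left c1 (by positivity)
      _ = HS := by field_simp
  have inv2 : B⁻¹ ≤ HS' / ((m : ℝ) + 1) ^ 2 := by
    rw [le_div_iff₀ (by positivity)]
    calc B⁻¹ * ((m : ℝ) + 1) ^ 2 ≤ B⁻¹ * (B * HS') := by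
          apply mul_le_mul_of_nonneg_left c2 (by positivity)
      _ = HS' := by field_simp
  have hgp : 0 < g i ^ p := Real.rpow_pos_of_pos hgi p
  -- main chain
  have step1 : (g i ^ p * B * A)⁻¹ = (g i ^ p)⁻¹ * B⁻¹ * A⁻¹ := by
    rw [mul_inv, mul_inv]
  have step2 : (g i ^ p)⁻¹ * B⁻¹ * A⁻¹ ≤
      (g i ^ p)⁻¹ * (HS' / ((m : ℝ) + 1) ^ 2) * (HS / (m : ℝ) ^ 2) := by
    apply mul_le_mul _ inv1 (by positivity) (by positivity)
    exact mul_le_mul_of_nonneg_left inv2 (by positivity)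
  have step3 : (g i ^ p)⁻¹ * (HS' / ((m : ℝ) + 1) ^ 2) * (HS / (m : ℝ) ^ 2) =
      (1 / ((m : ℝ) ^ 2 * ((m : ℝ) + 1) ^ 2)) * ((g i ^ p)⁻¹ * (HS' * HS)) := by
    field_simp
  have step4 : (g i ^ p)⁻¹ * (HS' * HS) =
      ∑ b ∈ insert i S, ∑ a ∈ S, (g i ^ p)⁻¹ * (g b)⁻¹ * (g a)⁻¹ := by
    rw [← hHS', hHS, sum_mul_sum, mul_sum]
    exact sum_congr rfl fun b _ => by rw [mul_sum]; exact sum_congr rfl fun a _ => by ring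
  have step5 : ∑ b ∈ insert i S, ∑ a ∈ S, (g i ^ p)⁻¹ * (g b)⁻¹ * (g a)⁻¹ ≤
      ∑ b ∈ insert i S, ∑ a ∈ S,
        (p / (p + 2) * (1 / g i ^ (p + 2)) + 1 / (p + 2) * (1 / g b ^ (p + 2))
          + 1 / (p + 2) * (1 / g a ^ (p + 2))) := by
    apply sum_le_sum
    intro b hb
    apply sum_le_sum
    intro a ha
    exact amgm p hp hgi (hpos b hb) (hposS a ha)
  set Ui := 1 / g i ^ (p + 2) with hUi
  set SU := ∑ a ∈ S, 1 / g a ^ (p + 2) with hSU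
  have step6 : ∑ b ∈ insert i S, ∑ a ∈ S,
      (p / (p + 2) * (1 / g i ^ (p + 2)) + 1 / (p + 2) * (1 / g b ^ (p + 2))
        + 1 / (p + 2) * (1 / g a ^ (p + 2))) =
      ((m : ℝ) + 1) * ((m : ℝ) * (p / (p + 2) * Ui) + 1 / (p + 2) * SU)
        + (m : ℝ) * (1 / (p + 2)) * (Ui + SU) := by
    have inner : ∀ b, (∑ a ∈ S,
        (p / (p + 2) * (1 / g i ^ (p + 2)) + 1 / (p + 2) * (1 / g b ^ (p + 2))
          + 1 / (p + 2) * (1 / g a ^ (p + 2)))) =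
        (m : ℝ) * (p / (p + 2) * Ui + 1 / (p + 2) * (1 / g b ^ (p + 2)))
          + 1 / (p + 2) * SU := by
      intro b
      rw [sum_add_distrib, sum_const, nsmul_eq_mul, ← mul_sum, hSU, hUi]
    rw [sum_congr rfl fun b _ => inner b, sum_add_distrib, sum_const, hcardins,
      nsmul_eq_mul]
    have expand : ∑ b ∈ insert i S,
        ((m : ℝ) * (p / (p + 2) * Ui + 1 / (p + 2) * (1 / g b ^ (p + 2)))) =
        ((m : ℝ) + 1) * ((m : ℝ) * (p / (p + 2) * Ui))
          + (m : ℝ) * (1 / (p + 2)) * (Ui + SU) := by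
      have : ∀ b, (m : ℝ) * (p / (p + 2) * Ui + 1 / (p + 2) * (1 / g b ^ (p + 2)))
          = (m : ℝ) * (p / (p + 2) * Ui) + (m : ℝ) * (1 / (p + 2)) * (1 / g b ^ (p + 2)) := by
        intro b; ring
      rw [sum_congr rfl fun b _ => this b, sum_add_distrib, sum_const, hcardins,
        nsmul_eq_mul, ← mul_sum, sum_insert hiS, ← hSU, ← hUi]
      push_cast
      ring
    rw [expand]
    push_cast
    ring
  have step7 : (1 / ((m : ℝ) ^ 2 * ((m : ℝ) + 1) ^ 2)) *
      (((m : ℝ) + 1) * ((m : ℝ) * (p / (p + 2) * Ui) + 1 / (p + 2) * SU)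
        + (m : ℝ) * (1 / (p + 2)) * (Ui + SU)) =
      (p / (p + 2) * ww m + 1 / (p + 2) * (ww m - vv (m + 1))) * Ui
        + 1 / (p + 2) * (vv m - vv (m + 1)) * SU := by
    have hp2 : (p : ℝ) + 2 ≠ 0 := by linarith
    unfold ww vv
    push_cast
    field_simp
    ring
  calc (g i ^ p * (∑ j ∈ insert i S, g j) * (∑ j ∈ S, g j))⁻¹
      = (g i ^ p)⁻¹ * B⁻¹ * A⁻¹ := by rw [hB]; exact step1
    _ ≤ (g i ^ p)⁻¹ * (HS' / ((m : ℝ) + 1) ^ 2) * (HS / (m : ℝ) ^ 2) := step2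
    _ = (1 / ((m : ℝ) ^ 2 * ((m : ℝ) + 1) ^ 2)) * ((g i ^ p)⁻¹ * (HS' * HS)) := step3
    _ ≤ (1 / ((m : ℝ) ^ 2 * ((m : ℝ) + 1) ^ 2)) *
        (((m : ℝ) + 1) * ((m : ℝ) * (p / (p + 2) * Ui) + 1 / (p + 2) * SU)
          + (m : ℝ) * (1 / (p + 2)) * (Ui + SU)) := by
        rw [step4, ← step6]
        apply mul_le_mul_of_nonneg_left step5 (by positivity)
    _ = _ := by rw [step7]



lemma swap_low (n : ℕ) (ψ : ℕ → ℕ → ℝ) (u : ℕ → ℝ) :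
    ∑ i ∈ range n, ∑ k ∈ range i, ψ i k * (∑ a ∈ Ico k i, u a)
      = ∑ t ∈ range n, u t * (∑ i ∈ Ico (t + 1) n, ∑ k ∈ range (t + 1), ψ i k) := by
  have h1 : ∀ i : ℕ, ∑ k ∈ range i, ψ i k * (∑ a ∈ Ico k i, u a)
      = ∑ a ∈ range i, u a * (∑ k ∈ range (a + 1), ψ i k) := by
    intro i
    calc ∑ k ∈ range i, ψ i k * (∑ a ∈ Ico k i, u a)
        = ∑ k ∈ Ico 0 i, ∑ a ∈ Ico k i, ψ i k * u a := by
          rw [range_eq_Ico]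
          exact sum_congr rfl fun k _ => mul_sum _ _ _
      _ = ∑ a ∈ Ico 0 i, ∑ k ∈ Ico 0 (a + 1), ψ i k * u a := sum_Ico_Ico_comm 0 i _
      _ = ∑ a ∈ range i, u a * (∑ k ∈ range (a + 1), ψ i k) := by
          rw [← range_eq_Ico]
          refine sum_congr rfl fun a _ => ?_
          rw [← sum_mul, mul_comm, Nat.Ico_zero_eq_range]
  rw [sum_congr rfl fun i _ => h1 i]
  have h2 := sum_Ico_Ico_comm' 0 n (fun a i => u a * (∑ k ∈ range (a + 1), ψ i k))
  rw [← range_eq_Ico] at h2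
  simp only [Nat.Ico_zero_eq_range] at h2
  rw [← h2]
  refine sum_congr rfl fun t ht => ?_
  rw [mul_sum]

lemma swap_up (n : ℕ) (ψ : ℕ → ℕ → ℝ) (u : ℕ → ℝ) :
    ∑ i ∈ range n, ∑ k ∈ Ico (i + 2) (n + 1), ψ i k * (∑ a ∈ Ico (i + 1) k, u a)
      = ∑ t ∈ range n, u t * (∑ i ∈ range t, ∑ k ∈ Ico (t + 1) (n + 1), ψ i k) := by
  have h1 : ∀ i, i ∈ range n → ∑ k ∈ Ico (i + 2) (n + 1), ψ i k * (∑ a ∈ Ico (i + 1) k, u a)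
      = ∑ a ∈ Ico (i + 1) n, u a * (∑ k ∈ Ico (a + 1) (n + 1), ψ i k) := by
    intro i hi
    rw [mem_range] at hi
    calc ∑ k ∈ Ico (i + 2) (n + 1), ψ i k * (∑ a ∈ Ico (i + 1) k, u a)
        = ∑ k ∈ Ico (i + 2) (n + 1), ∑ a ∈ Ico (i + 1) k, ψ i k * u a := by
          exact sum_congr rfl fun k _ => mul_sum _ _ _
      _ = ∑ k ∈ Ico (i + 1) (n + 1), ∑ a ∈ Ico (i + 1) k, ψ i k * u a := by
          rw [sum_eq_sum_Ico_succ_bot (show i + 1 < n + 1 by omega)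
            (fun k => ∑ a ∈ Ico (i + 1) k, ψ i k * u a)]
          simp
      _ = ∑ a ∈ Ico (i + 1) (n + 1), ∑ k ∈ Ico (a + 1) (n + 1), ψ i k * u a :=
          (sum_Ico_Ico_comm' (i + 1) (n + 1) fun a k => ψ i k * u a).symm
      _ = ∑ a ∈ Ico (i + 1) n, ∑ k ∈ Ico (a + 1) (n + 1), ψ i k * u a := by
          rw [sum_Ico_succ_top (show i + 1 ≤ n by omega)]
          simp
      _ = ∑ a ∈ Ico (i + 1) n, u a * (∑ k ∈ Ico (a + 1) (n + 1), ψ i k) := by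
          refine sum_congr rfl fun a _ => ?_
          rw [← sum_mul, mul_comm]
  rw [sum_congr rfl h1]
  have h2 := sum_Ico_Ico_comm' 0 n
    (fun i a => u a * (∑ k ∈ Ico (a + 1) (n + 1), ψ i k))
  rw [← range_eq_Ico] at h2
  rw [h2]
  refine sum_congr rfl fun t ht => ?_
  rw [mul_sum, Nat.Ico_zero_eq_range]

noncomputable def phi (p : ℝ) (m : ℕ) : ℝ :=
  p / (p + 2) * ww m + 1 / (p + 2) * (ww m - vv (m + 1))
noncomputable def psi (p : ℝ) (i k : ℕ) : ℝ := 1 / (p + 2) * (vv (i - k) - vv (i - k + 1))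
noncomputable def psiu (p : ℝ) (i k : ℕ) : ℝ :=
  1 / (p + 2) * (vv (k - i - 1) - vv (k - i - 1 + 1))
noncomputable def Rs (c : ℕ) : ℝ := ∑ j ∈ range c, vv (j + 1)


lemma sum_vv_shift (t : ℕ) : ∑ j ∈ range t, vv (j + 2) = Rs (t + 1) - 1 := by
  unfold Rs
  rw [sum_range_succ' (fun j => vv (j + 1)) t]
  have h : ∀ j ∈ range t, vv (j + 1 + 1) = vv (j + 2) := fun j _ => rfl
  rw [sum_congr rfl h, show (0:ℕ) + 1 = 1 from rfl, vv_one]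
  ring

lemma sum_phi_eval (p : ℝ) (c : ℕ) :
    ∑ j ∈ range c, phi p (j + 1) =
      (p / (p + 2) + 1 / (p + 2)) * (1 - 1 / ((c : ℝ) + 1)) - 1 / (p + 2) * (Rs (c + 1) - 1) := by
  have h1 : ∀ j ∈ range c, phi p (j + 1) =
      (p / (p + 2) + 1 / (p + 2)) * ww (j + 1) - 1 / (p + 2) * vv (j + 2) := by
    intro j _
    unfold phi
    ring_nf
  rw [sum_congr rfl h1, sum_sub_distrib, ← mul_sum, ← mul_sum, sum_ww, sum_vv_shift]

set_option maxHeartbeats 1000000 in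
/-- the main scalar estimate on the coefficient of `u t`. -/
lemma keylemma (p : ℝ) (hp : 0 ≤ p) (n t : ℕ) (ht : t < n) :
    (∑ k ∈ range t, phi p (t - k)) + (∑ k ∈ Ico (t + 2) (n + 1), phi p (k - t - 1))
      + (∑ i ∈ Ico (t + 1) n, ∑ k ∈ range (t + 1), psi p i k)
      + (∑ i ∈ range t, ∑ k ∈ Ico (t + 1) (n + 1), psiu p i k)
      < 2 - 3 / ((n : ℝ) + 1) := by
  have hp2 : (0 : ℝ) < p + 2 := by linarith
  set s := n - 1 - t with hsdef
  have hs : t + 1 + s = n := by omega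
  -- Evaluation A
  have eA : ∑ k ∈ range t, phi p (t - k) =
      (p / (p + 2) + 1 / (p + 2)) * (1 - 1 / ((t : ℝ) + 1)) - 1 / (p + 2) * (Rs (t + 1) - 1) := by
    rw [show ∑ k ∈ range t, phi p (t - k) = ∑ k ∈ range t, (fun j => phi p (j + 1)) (t - 1 - k)
      from sum_congr rfl fun k hk => by
        rw [mem_range] at hk
        show phi p (t - k) = phi p (t - 1 - k + 1)
        congr 1
        omega]
    rw [sum_range_reflect (fun j => phi p (j + 1)) t, sum_phi_eval]
  -- Evaluation B
  have eB : ∑ k ∈ Ico (t + 2) (n + 1), phi p (k - t - 1) =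
      (p / (p + 2) + 1 / (p + 2)) * (1 - 1 / ((s : ℝ) + 1)) - 1 / (p + 2) * (Rs (s + 1) - 1) := by
    rw [sum_Ico_eq_sum_range]
    rw [show n + 1 - (t + 2) = s by omega]
    rw [show ∑ j ∈ range s, phi p (t + 2 + j - t - 1) = ∑ j ∈ range s, phi p (j + 1)
      from sum_congr rfl fun j _ => by congr 1; omega]
    rw [sum_phi_eval]
  -- Evaluation C
  have eCinner : ∀ i ∈ Ico (t + 1) n, ∑ k ∈ range (t + 1), psi p i k =
      1 / (p + 2) * (vv (i - t) - vv (i + 1)) := by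
    intro i hi
    rw [mem_Ico] at hi
    have h1 : ∀ k ∈ range (t + 1), psi p i k =
        1 / (p + 2) * ((fun k => vv (i + 1 - k)) (k + 1) - (fun k => vv (i + 1 - k)) k) := by
      intro k hk
      rw [mem_range] at hk
      show psi p i k = 1 / (p + 2) * (vv (i + 1 - (k + 1)) - vv (i + 1 - k))
      unfold psi
      rw [show i - k + 1 = i + 1 - k from by omega, show i - k = i + 1 - (k + 1) from by omega]
    rw [sum_congr rfl h1, ← mul_sum, sum_range_sub (fun k => vv (i + 1 - k)) (t + 1)]
    have h5 : i + 1 - (t + 1) = i - t := by omega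
    have h6 : i + 1 - 0 = i + 1 := rfl
    simp only [h5, h6]
  have eC : ∑ i ∈ Ico (t + 1) n, ∑ k ∈ range (t + 1), psi p i k =
      1 / (p + 2) * (Rs s - (Rs n - Rs (t + 1))) := by
    rw [sum_congr rfl eCinner, ← mul_sum, sum_sub_distrib]
    have h2 : ∑ i ∈ Ico (t + 1) n, vv (i - t) = Rs s := by
      rw [sum_Ico_eq_sum_range, show n - (t + 1) = s by omega]
      unfold Rs
      exact sum_congr rfl fun j _ => by congr 1; omega
    have h3 : ∑ i ∈ Ico (t + 1) n, vv (i + 1) = Rs n - Rs (t + 1) :=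
      sum_Ico_eq_sub (fun i => vv (i + 1)) (by omega)
    rw [h2, h3]
  -- Evaluation D
  have eDinner : ∀ i ∈ range t, ∑ k ∈ Ico (t + 1) (n + 1), psiu p i k =
      1 / (p + 2) * (vv (t - i) - vv (n - i)) := by
    intro i hi
    rw [mem_range] at hi
    rw [sum_Ico_eq_sum_range, show n + 1 - (t + 1) = n - t by omega]
    have h1 : ∀ j ∈ range (n - t), psiu p i (t + 1 + j) =
        1 / (p + 2) * ((fun j => vv (t - i + j)) j - (fun j => vv (t - i + j)) (j + 1)) := by
      intro j hj
      show psiu p i (t + 1 + j) = 1 / (p + 2) * (vv (t - i + j) - vv (t - i + (j + 1)))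
      unfold psiu
      rw [show t + 1 + j - i - 1 = t - i + j from by omega,
        show t - i + j + 1 = t - i + (j + 1) from by omega]
    rw [sum_congr rfl h1, ← mul_sum, sum_range_sub' (fun j => vv (t - i + j)) (n - t)]
    have h5 : t - i + (n - t) = n - i := by omega
    have h6 : t - i + 0 = t - i := rfl
    simp only [h5, h6]
  have eD : ∑ i ∈ range t, ∑ k ∈ Ico (t + 1) (n + 1), psiu p i k =
      1 / (p + 2) * (Rs t - (Rs n - Rs (s + 1))) := by
    rw [sum_congr rfl eDinner, ← mul_sum, sum_sub_distrib]
    have h2 : ∑ i ∈ range t, vv (t - i) = Rs t := by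
      rw [show ∑ i ∈ range t, vv (t - i) = ∑ i ∈ range t, (fun j => vv (j + 1)) (t - 1 - i)
        from sum_congr rfl fun i hi => by
          rw [mem_range] at hi
          show vv (t - i) = vv (t - 1 - i + 1)
          congr 1
          omega]
      rw [sum_range_reflect (fun j => vv (j + 1)) t]
      rfl
    have h3 : ∑ i ∈ range t, vv (n - i) = Rs n - Rs (s + 1) := by
      rw [show ∑ i ∈ range t, vv (n - i) = ∑ i ∈ range t, (fun j => vv (s + 2 + j)) (t - 1 - i)
        from sum_congr rfl fun i hi => by
          rw [mem_range] at hi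
          show vv (n - i) = vv (s + 2 + (t - 1 - i))
          congr 1
          omega]
      rw [sum_range_reflect (fun j => vv (s + 2 + j)) t]
      have h4 : ∑ j ∈ range t, vv (s + 2 + j) = ∑ k ∈ Ico (s + 1) n, vv (k + 1) := by
        rw [sum_Ico_eq_sum_range, show n - (s + 1) = t by omega]
        exact sum_congr rfl fun j _ => by congr 1; omega
      rw [h4, sum_Ico_eq_sub (fun k => vv (k + 1)) (by omega : s + 1 ≤ n)]
      rfl
    rw [h2, h3]
  -- now pure real arithmetic
  rw [eA, eB, eC, eD]
  have hRsplitT : Rs n - Rs t = ∑ k ∈ Ico t n, vv (k + 1) := by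
    unfold Rs
    exact (sum_Ico_eq_sub (fun k => vv (k + 1)) ht.le).symm
  have hRsplitS : Rs n - Rs s = ∑ k ∈ Ico s n, vv (k + 1) := by
    unfold Rs
    exact (sum_Ico_eq_sub (fun k => vv (k + 1)) (by omega : s ≤ n)).symm
  have F1 : 1 / ((t : ℝ) + 1) - 1 / ((n : ℝ) + 1) < Rs n - Rs t := by
    rw [hRsplitT]; exact tail_lt t n ht
  have F2 : 1 / ((s : ℝ) + 1) - 1 / ((n : ℝ) + 1) < Rs n - Rs s := by
    rw [hRsplitS]; exact tail_lt s n (by omega)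
  have hta : (0 : ℝ) < (t : ℝ) + 1 := by positivity
  have hsa : (0 : ℝ) < (s : ℝ) + 1 := by positivity
  have hna : (0 : ℝ) < (n : ℝ) + 1 := by positivity
  have h3 : 4 / ((n : ℝ) + 1) ≤ 1 / ((t : ℝ) + 1) + 1 / ((s : ℝ) + 1) := by
    have hcast : ((t : ℝ) + 1) + ((s : ℝ) + 1) = (n : ℝ) + 1 := by
      have h := congrArg (Nat.cast : ℕ → ℝ) hs
      push_cast at h
      linarith
    rw [div_add_div _ _ (ne_of_gt hta) (ne_of_gt hsa), div_le_div_iff₀ hna (by positivity)]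
    nlinarith [sq_nonneg ((t : ℝ) - (s : ℝ))]
  have hmu : 0 < 1 / (p + 2) := by positivity
  have hmu2 : 1 / (p + 2) ≤ 1 / 2 := by
    rw [div_le_div_iff₀ hp2 (by norm_num)]
    linarith
  have expand : (p / (p + 2) + 1 / (p + 2)) * (1 - 1 / ((t : ℝ) + 1))
        - 1 / (p + 2) * (Rs (t + 1) - 1)
      + ((p / (p + 2) + 1 / (p + 2)) * (1 - 1 / ((s : ℝ) + 1))
        - 1 / (p + 2) * (Rs (s + 1) - 1))
      + 1 / (p + 2) * (Rs s - (Rs n - Rs (t + 1)))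
      + 1 / (p + 2) * (Rs t - (Rs n - Rs (s + 1)))
      = (1 - 1 / (p + 2)) * (2 - 1 / ((t : ℝ) + 1) - 1 / ((s : ℝ) + 1))
        + 2 * (1 / (p + 2))
        - 1 / (p + 2) * ((Rs n - Rs t) + (Rs n - Rs s)) := by
    field_simp
    ring
  rw [expand]
  have b1 : 1 / (p + 2) * ((1 / ((t : ℝ) + 1) - 1 / ((n : ℝ) + 1))
        + (1 / ((s : ℝ) + 1) - 1 / ((n : ℝ) + 1)))
      < 1 / (p + 2) * ((Rs n - Rs t) + (Rs n - Rs s)) :=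
    mul_lt_mul_of_pos_left (by linarith) hmu
  have k2 : 1 / (p + 2) * (1 / ((n : ℝ) + 1)) ≤ 1 / 2 * (1 / ((n : ℝ) + 1)) :=
    mul_le_mul_of_nonneg_right hmu2 (by positivity)
  ring_nf at b1 k2 h3 ⊢
  linarith [b1, k2, h3]

end SumOffdiagAux

open SumOffdiagAux in
set_option maxHeartbeats 1000000 in
/-- Lemma 3.2 of the paper, stated with `0`-based indices.
For `d ≥ 2`, `p ≥ 0` and `x_0 < x_1 < ⋯ < x_{d-1}`,
`∑_{i=0}^{d-2} ∑_{k ∉ {i,i+1}} 1/((x_{i+1}-x_i)^p (x_{i+1}-x_k)(x_i-x_k))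
  < (2 - 3/d) ∑_{i=0}^{d-2} 1/(x_{i+1}-x_i)^{p+2}`. -/
theorem sum_offdiag_lt
    (d : ℕ) (hd : 2 ≤ d) (p : ℝ) (hp : 0 ≤ p) (x : ℕ → ℝ)
    (hx : ∀ i, i + 1 < d → x i < x (i + 1)) :
    ∑ i ∈ Finset.range (d - 1),
        ∑ k ∈ (Finset.range d).filter (fun k => k ≠ i ∧ k ≠ i + 1),
          1 / ((x (i + 1) - x i) ^ p * (x (i + 1) - x k) * (x i - x k))
      < (2 - 3 / (d : ℝ)) *
          ∑ i ∈ Finset.range (d - 1), 1 / (x (i + 1) - x i) ^ (p + 2) := by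
  obtain ⟨n, rfl⟩ : ∃ n, d = n + 1 := ⟨d - 1, by omega⟩
  have hn : 1 ≤ n := by omega
  simp only [Nat.add_sub_cancel]
  have hcast : ((n + 1 : ℕ) : ℝ) = (n : ℝ) + 1 := by push_cast; ring
  rw [hcast]
  have hgpos : ∀ j, j < n → 0 < x (j + 1) - x j := fun j hj => sub_pos.mpr (hx j (by omega))
  have hxsum : ∀ k i : ℕ, k ≤ i → x i - x k = ∑ j ∈ Ico k i, (x (j + 1) - x j) := by
    intro k i hki
    rw [sum_Ico_eq_sum_range]
    have h1 : ∀ j ∈ range (i - k), x (k + j + 1) - x (k + j) =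
        (fun j => x (k + j)) (j + 1) - (fun j => x (k + j)) j := fun j _ => rfl
    rw [sum_congr rfl h1, sum_range_sub (fun j => x (k + j)) (i - k)]
    have h2 : k + (i - k) = i := by omega
    rw [h2, Nat.add_zero]
  have upos : ∀ t, t < n → 0 < 1 / (x (t + 1) - x t) ^ (p + 2) :=
    fun t ht' => div_pos one_pos (Real.rpow_pos_of_pos (hgpos t ht') _)
  -- per-pair bounds
  have pairL : ∀ i, i < n → ∀ k, k < i →
      1 / ((x (i + 1) - x i) ^ p * (x (i + 1) - x k) * (x i - x k)) ≤
        phi p (i - k) * (1 / (x (i + 1) - x i) ^ (p + 2))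
          + psi p i k * (∑ a ∈ Ico k i, 1 / (x (a + 1) - x a) ^ (p + 2)) := by
    intro i hi k hk
    have hins : insert i (Ico k i) = Ico k (i + 1) := by
      rw [Finset.Ico_insert_right hk.le, Finset.Ico_add_one_right_eq_Icc]
    have hiS : i ∉ Ico k i := by simp
    have hne : (Ico k i).Nonempty := nonempty_Ico.mpr hk
    have hpos' : ∀ j ∈ insert i (Ico k i), 0 < (fun j => x (j + 1) - x j) j := by
      intro j hj
      rw [hins, mem_Ico] at hj
      exact hgpos j (by omega)
    have hcore := core p hp (fun j => x (j + 1) - x j) (Ico k i) i hiS hne hpos'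
    rw [Nat.card_Ico] at hcore
    have h1 : x (i + 1) - x k = ∑ j ∈ insert i (Ico k i), (x (j + 1) - x j) := by
      rw [hins]; exact hxsum k (i + 1) (by omega)
    have h2 : x i - x k = ∑ j ∈ Ico k i, (x (j + 1) - x j) := hxsum k i hk.le
    rw [h1, h2, one_div]
    exact hcore
  have pairU : ∀ i, i < n → ∀ k, i + 2 ≤ k → k < n + 1 →
      1 / ((x (i + 1) - x i) ^ p * (x (i + 1) - x k) * (x i - x k)) ≤
        phi p (k - i - 1) * (1 / (x (i + 1) - x i) ^ (p + 2))
          + psiu p i k * (∑ a ∈ Ico (i + 1) k, 1 / (x (a + 1) - x a) ^ (p + 2)) := by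
    intro i hi k hk2 hkn
    have hins : insert i (Ico (i + 1) k) = Ico i k := Finset.insert_Ico_add_one_left_eq_Ico (by omega)
    have hiS : i ∉ Ico (i + 1) k := by simp
    have hne : (Ico (i + 1) k).Nonempty := nonempty_Ico.mpr (by omega)
    have hpos' : ∀ j ∈ insert i (Ico (i + 1) k), 0 < (fun j => x (j + 1) - x j) j := by
      intro j hj
      rw [hins, mem_Ico] at hj
      exact hgpos j (by omega)
    have hcore := core p hp (fun j => x (j + 1) - x j) (Ico (i + 1) k) i hiS hne hpos'
    rw [Nat.card_Ico, show k - (i + 1) = k - i - 1 from by omega] at hcore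
    have h1 : x (i + 1) - x k = -(∑ j ∈ Ico (i + 1) k, (x (j + 1) - x j)) := by
      rw [← hxsum (i + 1) k (by omega)]; ring
    have h2 : x i - x k = -(∑ j ∈ insert i (Ico (i + 1) k), (x (j + 1) - x j)) := by
      rw [hins, ← hxsum i k (by omega)]; ring
    rw [h1, h2, show (x (i + 1) - x i) ^ p * -(∑ j ∈ Ico (i + 1) k, (x (j + 1) - x j)) *
        -(∑ j ∈ insert i (Ico (i + 1) k), (x (j + 1) - x j)) =
        (x (i + 1) - x i) ^ p * (∑ j ∈ insert i (Ico (i + 1) k), (x (j + 1) - x j)) *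
        (∑ j ∈ Ico (i + 1) k, (x (j + 1) - x j)) from by ring, one_div]
    exact hcore
  -- filter split
  have hsplitF : ∀ i ∈ range n, (Finset.range (n + 1)).filter (fun k => k ≠ i ∧ k ≠ i + 1)
      = range i ∪ Ico (i + 2) (n + 1) := by
    intro i hi
    rw [mem_range] at hi
    ext k
    simp only [mem_filter, mem_range, mem_union, mem_Ico]
    omega
  have hdisj : ∀ i : ℕ, Disjoint (range i) (Ico (i + 2) (n + 1)) := by
    intro i
    rw [disjoint_left]
    intro a ha hb
    rw [mem_range] at ha
    rw [mem_Ico] at hb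
    omega
  calc ∑ i ∈ range n, ∑ k ∈ (Finset.range (n + 1)).filter (fun k => k ≠ i ∧ k ≠ i + 1),
          1 / ((x (i + 1) - x i) ^ p * (x (i + 1) - x k) * (x i - x k))
      = ∑ i ∈ range n,
          ((∑ k ∈ range i, 1 / ((x (i + 1) - x i) ^ p * (x (i + 1) - x k) * (x i - x k)))
            + ∑ k ∈ Ico (i + 2) (n + 1),
                1 / ((x (i + 1) - x i) ^ p * (x (i + 1) - x k) * (x i - x k))) := by
        refine sum_congr rfl fun i hi => ?_
        rw [hsplitF i hi, sum_union (hdisj i)]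
    _ ≤ ∑ i ∈ range n,
          ((∑ k ∈ range i, (phi p (i - k) * (1 / (x (i + 1) - x i) ^ (p + 2))
              + psi p i k * (∑ a ∈ Ico k i, 1 / (x (a + 1) - x a) ^ (p + 2))))
            + ∑ k ∈ Ico (i + 2) (n + 1), (phi p (k - i - 1) * (1 / (x (i + 1) - x i) ^ (p + 2))
              + psiu p i k * (∑ a ∈ Ico (i + 1) k, 1 / (x (a + 1) - x a) ^ (p + 2)))) := by
        refine sum_le_sum fun i hi => ?_
        rw [mem_range] at hi
        refine add_le_add (sum_le_sum fun k hk => ?_) (sum_le_sum fun k hk => ?_)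
        · rw [mem_range] at hk
          exact pairL i hi k hk
        · rw [mem_Ico] at hk
          exact pairU i hi k hk.1 hk.2
    _ = (∑ i ∈ range n,
            ((∑ k ∈ range i, phi p (i - k)) + ∑ k ∈ Ico (i + 2) (n + 1), phi p (k - i - 1))
              * (1 / (x (i + 1) - x i) ^ (p + 2)))
        + ((∑ i ∈ range n, ∑ k ∈ range i,
              psi p i k * (∑ a ∈ Ico k i, 1 / (x (a + 1) - x a) ^ (p + 2)))
          + (∑ i ∈ range n, ∑ k ∈ Ico (i + 2) (n + 1),
              psiu p i k * (∑ a ∈ Ico (i + 1) k, 1 / (x (a + 1) - x a) ^ (p + 2)))) := by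
        rw [← sum_add_distrib, ← sum_add_distrib]
        refine sum_congr rfl fun i _ => ?_
        rw [sum_add_distrib, sum_add_distrib, ← sum_mul, ← sum_mul]
        ring
    _ = ∑ t ∈ range n,
          (((∑ k ∈ range t, phi p (t - k)) + ∑ k ∈ Ico (t + 2) (n + 1), phi p (k - t - 1))
            + ((∑ i ∈ Ico (t + 1) n, ∑ k ∈ range (t + 1), psi p i k)
              + (∑ i ∈ range t, ∑ k ∈ Ico (t + 1) (n + 1), psiu p i k)))
            * (1 / (x (t + 1) - x t) ^ (p + 2)) := by
        rw [swap_low n (psi p) (fun t => 1 / (x (t + 1) - x t) ^ (p + 2)),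
          swap_up n (psiu p) (fun t => 1 / (x (t + 1) - x t) ^ (p + 2)),
          ← sum_add_distrib, ← sum_add_distrib]
        refine sum_congr rfl fun t _ => ?_
        ring
    _ < ∑ t ∈ range n, (2 - 3 / ((n : ℝ) + 1)) * (1 / (x (t + 1) - x t) ^ (p + 2)) := by
        apply sum_lt_sum_of_nonempty (nonempty_range_iff.mpr (by omega))
        intro t ht'
        rw [mem_range] at ht'
        have hkey := keylemma p hp n t ht'
        exact mul_lt_mul_of_pos_right (by linarith [hkey]) (upos t ht')
    _ = (2 - 3 / ((n : ℝ) + 1)) * ∑ t ∈ range n, 1 / (x (t + 1) - x t) ^ (p + 2) := by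
        rw [mul_sum]
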